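/- (Isometric decomposition of pure tripartite states with product marginal.) Let |ω_{ABC}⟩ be a pure state on finite-dimensional H_A ⊗ H_B ⊗ H_C whose reduced state satisfies ω_{AB} = ω_A ⊗ ω_B. Then there exist finite-dimensional Hilbert spaces H_{C₁}, H_{C₂}, an isometry V: H_C → H_{C₁} ⊗ H_{C₂}, and pure states |φ_{AC₁}⟩, |χ_{BC₂}⟩ that are purifications of ω_A and ω_B respectively, such that (𝟙_{AB} ⊗ V)|ω_{ABC}⟩ = |φ_{AC₁}⟩ ⊗ |χ_{BC₂}⟩. -/

import Mathlib

/-!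
Common definitions for quantum coordination networks:
density operators, purity, trace norm, von Neumann entropy, partial traces,
mutual information, CPTP maps (via the Choi matrix), tensor products and
application of channels to subsystems.
-/

noncomputable section
open scoped BigOperators ComplexOrder

namespace QCoord

variable {α β γ δ : Type*}

/-- A density operator: positive semidefinite with unit trace. -/
def IsDensity [Fintype α] (ρ : Matrix α α ℂ) : Prop :=
  ρ.PosSemidef ∧ ρ.trace = 1

/-- Outer product |v⟩⟨v| of a vector. -/
def outer [Fintype α] (v : α → ℂ) : Matrix α α ℂ :=
  Matrix.of fun i j => v i * star (v j)

/-- A pure state: a rank-one density operator. -/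
def IsPure [Fintype α] (ρ : Matrix α α ℂ) : Prop :=
  IsDensity ρ ∧ ∃ v : α → ℂ, ρ = outer v

/-- The trace norm ‖M‖₁ = tr √(Mᴴ M). -/
def traceNorm [Fintype α] [DecidableEq α] (M : Matrix α α ℂ) : ℝ :=
  ((Matrix.posSemidef_conjTranspose_mul_self M).1.eigenvectorUnitary.1 *
    Matrix.diagonal (((↑) : ℝ → ℂ) ∘ (√·) ∘ (Matrix.posSemidef_conjTranspose_mul_self M).1.eigenvalues) *
    (star (Matrix.posSemidef_conjTranspose_mul_self M).1.eigenvectorUnitary : Matrix α α ℂ)).trace.re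

/-- Von Neumann entropy in qubits (base-2), via eigenvalues; junk value 0 for
non-Hermitian inputs. -/
def entropy [Fintype α] [DecidableEq α] (ρ : Matrix α α ℂ) : ℝ :=
  if h : ρ.IsHermitian then
    -∑ i, (h.eigenvalues i) * Real.logb 2 (h.eigenvalues i)
  else 0

/-- Partial trace over the second (right) factor. -/
def ptrR [Fintype β] (ρ : Matrix (α × β) (α × β) ℂ) : Matrix α α ℂ :=
  Matrix.of fun i j => ∑ k, ρ (i, k) (j, k)

/-- Partial trace over the first (left) factor. -/
def ptrL [Fintype α] (ρ : Matrix (α × β) (α × β) ℂ) : Matrix β β ℂ :=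
  Matrix.of fun i j => ∑ k, ρ (k, i) (k, j)

/-- Quantum mutual information I(α;β)_ρ for a bipartite state. -/
def mutualInfo [Fintype α] [Fintype β] [DecidableEq α] [DecidableEq β]
    (ρ : Matrix (α × β) (α × β) ℂ) : ℝ :=
  entropy (ptrR ρ) + entropy (ptrL ρ) - entropy ρ

/-- Conditional entropy S(α|β)_ρ = S(αβ) - S(β). -/
def condEntropy [Fintype α] [Fintype β] [DecidableEq α] [DecidableEq β]
    (ρ : Matrix (α × β) (α × β) ℂ) : ℝ :=
  entropy ρ - entropy (ptrL ρ)

/-- Choi matrix of a linear map on matrices. -/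
def choi [Fintype α] [DecidableEq α]
    (Φ : Matrix α α ℂ →ₗ[ℂ] Matrix β β ℂ) : Matrix (α × β) (α × β) ℂ :=
  Matrix.of fun p q => Φ (Matrix.single p.1 q.1 1) p.2 q.2

/-- CPTP (quantum channel): completely positive (PSD Choi matrix) and
trace-preserving. -/
def IsCPTP [Fintype α] [DecidableEq α] [Fintype β]
    (Φ : Matrix α α ℂ →ₗ[ℂ] Matrix β β ℂ) : Prop :=
  (choi Φ).PosSemidef ∧ ∀ ρ : Matrix α α ℂ, (Φ ρ).trace = ρ.trace

/-- Tensor (Kronecker) product of two square matrices. -/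
def tens (X : Matrix α α ℂ) (Y : Matrix β β ℂ) : Matrix (α × β) (α × β) ℂ :=
  Matrix.of fun p q => X p.1 q.1 * Y p.2 q.2

/-- Extension Φ ⊗ id of a channel by an identity on a spectator system. -/
def extR (Φ : Matrix α α ℂ →ₗ[ℂ] Matrix β β ℂ)
    (ρ : Matrix (α × γ) (α × γ) ℂ) : Matrix (β × γ) (β × γ) ℂ :=
  Matrix.of fun p q => Φ (Matrix.of fun i j => ρ (i, p.2) (j, q.2)) p.1 q.1

/-- Apply a channel to the subsystem identified by the equivalence `e`. -/
def applyOn {ε' : Type*} (e : δ ≃ α × γ)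
    (Φ : Matrix α α ℂ →ₗ[ℂ] Matrix ε' ε' ℂ)
    (ρ : Matrix δ δ ℂ) : Matrix (ε' × γ) (ε' × γ) ℂ :=
  extR Φ (Matrix.reindex e e ρ)

/-- n-fold tensor power of a square matrix. -/
def tpow [Fintype α] (ρ : Matrix α α ℂ) (n : ℕ) :
    Matrix (Fin n → α) (Fin n → α) ℂ :=
  Matrix.of fun i j => ∏ k, ρ (i k) (j k)

end QCoord

/-! ### The cascade network -/

namespace QCoord

/-- Reordering for Bob's encoding step in the cascade network. -/
def eBob {An M1 TB1 TB2 TC : Type*} :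
    (((An × M1) × TB1) × (TB2 × TC)) ≃ ((M1 × TB1 × TB2) × (An × TC)) where
  toFun x := ((x.1.1.2, x.1.2, x.2.1), (x.1.1.1, x.2.2))
  invFun y := (((y.2.1, y.1.1), y.1.2.1), (y.1.2.2, y.2.2))
  left_inv _ := rfl
  right_inv _ := rfl

/-- Reordering for Charlie's encoding step in the cascade network. -/
def eCharlie {Bn M2 An TC : Type*} :
    ((Bn × M2) × (An × TC)) ≃ ((M2 × TC) × (An × Bn)) where
  toFun x := ((x.1.2, x.2.2), (x.2.1, x.1.1))
  invFun y := ((y.2.2, y.1.1), (y.2.1, y.1.2))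
  left_inv _ := rfl
  right_inv _ := rfl

/-- Final reordering to (Aⁿ, Bⁿ, Cⁿ). -/
def eFin {Cn An Bn : Type*} : (Cn × (An × Bn)) ≃ (An × Bn × Cn) where
  toFun x := (x.2.1, x.2.2, x.1)
  invFun y := (y.2.2, (y.1, y.2.1))
  left_inv _ := rfl
  right_inv _ := rfl

variable {A B C R : Type*}

/-- n-fold tensor power of a tripartite state, indexed by
(Fin n → A) × (Fin n → B) × (Fin n → C). -/
def prodPow3 [Fintype A] [Fintype B] [Fintype C]
    (ω : Matrix (A × B × C) (A × B × C) ℂ) (n : ℕ) :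
    Matrix ((Fin n → A) × (Fin n → B) × (Fin n → C))
      ((Fin n → A) × (Fin n → B) × (Fin n → C)) ℂ :=
  Matrix.of fun p q =>
    ∏ k, ω (p.1 k, p.2.1 k, p.2.2 k) (q.1 k, q.2.1 k, q.2.2 k)

/-- n-fold tensor power of a four-partite state. -/
def prodPow4 [Fintype R] [Fintype A] [Fintype B] [Fintype C]
    (ωR : Matrix (R × A × B × C) (R × A × B × C) ℂ) (n : ℕ) :
    Matrix ((Fin n → R) × (Fin n → A) × (Fin n → B) × (Fin n → C))
      ((Fin n → R) × (Fin n → A) × (Fin n → B) × (Fin n → C)) ℂ :=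
  Matrix.of fun p q =>
    ∏ k, ωR (p.1 k, p.2.1 k, p.2.2.1 k, p.2.2.2 k)
      (q.1 k, q.2.1 k, q.2.2.1 k, q.2.2.2 k)

/-- Marginal ω_{BC} of a tripartite state. -/
def mBC [Fintype A] (ω : Matrix (A × B × C) (A × B × C) ℂ) :
    Matrix (B × C) (B × C) ℂ :=
  Matrix.of fun p q => ∑ a, ω (a, p.1, p.2) (a, q.1, q.2)

/-- Marginal ω_C of a tripartite state. -/
def mC [Fintype A] [Fintype B] (ω : Matrix (A × B × C) (A × B × C) ℂ) :
    Matrix C C ℂ :=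
  Matrix.of fun c c' => ∑ a, ∑ b, ω (a, b, c) (a, b, c')

/-- Marginal on ((B×C), R) of a purified state ω_{RABC}, arranged for I(BC;R). -/
def mBC_R [Fintype A] (ωR : Matrix (R × A × B × C) (R × A × B × C) ℂ) :
    Matrix ((B × C) × R) ((B × C) × R) ℂ :=
  Matrix.of fun p q => ∑ a, ωR (p.2, a, p.1.1, p.1.2) (q.2, a, q.1.1, q.1.2)

/-- Marginal on (C, (R×A)) of a purified state ω_{RABC}, arranged for I(C;RA). -/
def mC_RA [Fintype B] (ωR : Matrix (R × A × B × C) (R × A × B × C) ℂ) :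
    Matrix (C × (R × A)) (C × (R × A)) ℂ :=
  Matrix.of fun p q => ∑ b, ωR (p.2.1, p.2.2, b, p.1) (q.2.1, q.2.2, b, q.1)

variable (A B C) in
/-- A (2^ℓ₁, 2^ℓ₂, 2^k₁, 2^k₂, n) coordination code for the cascade network:
pre-shared entangled pure states Ψ (Alice–Bob) and Θ (Bob–Charlie) of Schmidt
ranks 2^{k₁}, 2^{k₂}, and CPTP encoders for Alice, Bob and Charlie with quantum
messages of dimensions 2^{ℓ₁}, 2^{ℓ₂}. -/
structure CascadeCode [Fintype A] [DecidableEq A] [Fintype B] [DecidableEq B]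
    [Fintype C] [DecidableEq C] (ℓ₁ ℓ₂ k₁ k₂ n : ℕ) where
  Ψ : Matrix (Fin (2 ^ k₁) × Fin (2 ^ k₁)) (Fin (2 ^ k₁) × Fin (2 ^ k₁)) ℂ
  Ψ_pure : IsPure Ψ
  Θ : Matrix (Fin (2 ^ k₂) × Fin (2 ^ k₂)) (Fin (2 ^ k₂) × Fin (2 ^ k₂)) ℂ
  Θ_pure : IsPure Θ
  EncA : Matrix (Fin (2 ^ k₁)) (Fin (2 ^ k₁)) ℂ →ₗ[ℂ]
    Matrix ((Fin n → A) × Fin (2 ^ ℓ₁)) ((Fin n → A) × Fin (2 ^ ℓ₁)) ℂ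
  EncA_cptp : IsCPTP EncA
  EncB : Matrix (Fin (2 ^ ℓ₁) × Fin (2 ^ k₁) × Fin (2 ^ k₂))
      (Fin (2 ^ ℓ₁) × Fin (2 ^ k₁) × Fin (2 ^ k₂)) ℂ →ₗ[ℂ]
    Matrix ((Fin n → B) × Fin (2 ^ ℓ₂)) ((Fin n → B) × Fin (2 ^ ℓ₂)) ℂ
  EncB_cptp : IsCPTP EncB
  Dec : Matrix (Fin (2 ^ ℓ₂) × Fin (2 ^ k₂)) (Fin (2 ^ ℓ₂) × Fin (2 ^ k₂)) ℂ →ₗ[ℂ]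
    Matrix (Fin n → C) (Fin n → C) ℂ
  Dec_cptp : IsCPTP Dec

/-- Output state ρ̂_{AⁿBⁿCⁿ} of a cascade coordination code: Alice applies her
encoder to her share of Ψ, Bob applies his encoder to (M₁, T_B', T_B''), and
Charlie applies his to (M₂, T_C). -/
def cascadeOutput [Fintype A] [DecidableEq A] [Fintype B] [DecidableEq B]
    [Fintype C] [DecidableEq C] {ℓ₁ ℓ₂ k₁ k₂ n : ℕ}
    (code : CascadeCode A B C ℓ₁ ℓ₂ k₁ k₂ n) :
    Matrix ((Fin n → A) × (Fin n → B) × (Fin n → C))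
      ((Fin n → A) × (Fin n → B) × (Fin n → C)) ℂ :=
  let ρ1 := extR code.EncA code.Ψ
  let ρ2 := applyOn eBob code.EncB (tens ρ1 code.Θ)
  let ρ3 := applyOn eCharlie code.Dec ρ2
  Matrix.reindex eFin eFin ρ3

/-- Achievability of a rate tuple (Q₁, Q₂, E₁, E₂) for coordination in the
cascade network: for every ε, δ > 0 and all sufficiently large n there is a
(2^{n(Q₁+δ)}, 2^{n(Q₂+δ)}, 2^{n(E₁+δ)}, 2^{n(E₂+δ)}, n) coordination code whose
output is ε-close to ω^{⊗n} in trace norm. -/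
def CascadeAchievable [Fintype A] [DecidableEq A] [Fintype B] [DecidableEq B]
    [Fintype C] [DecidableEq C] (ω : Matrix (A × B × C) (A × B × C) ℂ)
    (Q₁ Q₂ E₁ E₂ : ℝ) : Prop :=
  ∀ ε > (0 : ℝ), ∀ δ > (0 : ℝ), ∃ N : ℕ, ∀ n ≥ N,
    ∃ ℓ₁ ℓ₂ k₁ k₂ : ℕ,
      (ℓ₁ : ℝ) ≤ n * (Q₁ + δ) ∧ (ℓ₂ : ℝ) ≤ n * (Q₂ + δ) ∧
      (k₁ : ℝ) ≤ n * (E₁ + δ) ∧ (k₂ : ℝ) ≤ n * (E₂ + δ) ∧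
      ∃ code : CascadeCode A B C ℓ₁ ℓ₂ k₁ k₂ n,
        traceNorm (cascadeOutput code - prodPow3 ω n) ≤ ε

end QCoord

/-! ### The multiple-access network -/

namespace QCoord

variable {A B C C1 C2 : Type*}

/-- Marginal ω_A of a tripartite state. -/
def mA3 [Fintype B] [Fintype C] (ω : Matrix (A × B × C) (A × B × C) ℂ) :
    Matrix A A ℂ :=
  Matrix.of fun a a' => ∑ b, ∑ c, ω (a, b, c) (a', b, c)

/-- Marginal ω_B of a tripartite state. -/
def mB3 [Fintype A] [Fintype C] (ω : Matrix (A × B × C) (A × B × C) ℂ) :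
    Matrix B B ℂ :=
  Matrix.of fun b b' => ∑ a, ∑ c, ω (a, b, c) (a, b', c)

/-- Marginal ω_{AB} of a tripartite state. -/
def mAB3 [Fintype C] (ω : Matrix (A × B × C) (A × B × C) ℂ) :
    Matrix (A × B) (A × B) ℂ :=
  Matrix.of fun p q => ∑ c, ω (p.1, p.2, c) (q.1, q.2, c)

variable (A B C) in
/-- A (2^ℓ₁, 2^ℓ₂, n) coordination code for the multiple-access network:
CPTP encoders for Alice and Bob and a CPTP decoder for Charlie acting on the
two quantum descriptions. -/
structure MACCode [Fintype A] [DecidableEq A] [Fintype B] [DecidableEq B]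
    [Fintype C] [DecidableEq C] (ℓ₁ ℓ₂ n : ℕ) where
  EncA : Matrix (Fin n → A) (Fin n → A) ℂ →ₗ[ℂ]
    Matrix ((Fin n → A) × Fin (2 ^ ℓ₁)) ((Fin n → A) × Fin (2 ^ ℓ₁)) ℂ
  EncA_cptp : IsCPTP EncA
  EncB : Matrix (Fin n → B) (Fin n → B) ℂ →ₗ[ℂ]
    Matrix ((Fin n → B) × Fin (2 ^ ℓ₂)) ((Fin n → B) × Fin (2 ^ ℓ₂)) ℂ
  EncB_cptp : IsCPTP EncB
  Dec : Matrix (Fin (2 ^ ℓ₁) × Fin (2 ^ ℓ₂)) (Fin (2 ^ ℓ₁) × Fin (2 ^ ℓ₂)) ℂ →ₗ[ℂ]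
    Matrix (Fin n → C) (Fin n → C) ℂ
  Dec_cptp : IsCPTP Dec

section mac

variable [Fintype A] [DecidableEq A] [Fintype B] [DecidableEq B]
  [Fintype C] [DecidableEq C] {ℓ₁ ℓ₂ n : ℕ}

/-- Output state ρ̂_{AⁿBⁿCⁿ} of a multiple-access coordination code:
ρ̂ = (id ⊗ D)(E(ω_A^{⊗n}) ⊗ F(ω_B^{⊗n})). -/
def macOutput (ω : Matrix (A × B × C) (A × B × C) ℂ)
    (code : MACCode A B C ℓ₁ ℓ₂ n) :
    Matrix ((Fin n → A) × (Fin n → B) × (Fin n → C))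
      ((Fin n → A) × (Fin n → B) × (Fin n → C)) ℂ :=
  let ρ1 := code.EncA (tpow (mA3 ω) n)
  let ρ2 := code.EncB (tpow (mB3 ω) n)
  let ρ3 := applyOn
    (⟨fun x => ((x.1.2, x.2.2), (x.1.1, x.2.1)),
      fun y => ((y.2.1, y.1.1), (y.2.2, y.1.2)),
      fun _ => rfl, fun _ => rfl⟩ :
      (((Fin n → A) × Fin (2 ^ ℓ₁)) × ((Fin n → B) × Fin (2 ^ ℓ₂))) ≃
        ((Fin (2 ^ ℓ₁) × Fin (2 ^ ℓ₂)) × ((Fin n → A) × (Fin n → B))))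
    code.Dec (tens ρ1 ρ2)
  Matrix.reindex eFin eFin ρ3

/-- The reduced output state of a multiple-access code on (Aⁿ, Bⁿ). -/
def macOutputAB (ω : Matrix (A × B × C) (A × B × C) ℂ)
    (code : MACCode A B C ℓ₁ ℓ₂ n) :
    Matrix ((Fin n → A) × (Fin n → B)) ((Fin n → A) × (Fin n → B)) ℂ :=
  Matrix.of fun p q => ∑ cn : Fin n → C,
    macOutput ω code (p.1, p.2, cn) (q.1, q.2, cn)

/-- Achievability of a rate pair (Q₁, Q₂) for coordination in the
multiple-access network. -/
def MACAchievable (ω : Matrix (A × B × C) (A × B × C) ℂ) (Q₁ Q₂ : ℝ) : Prop :=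
  ∀ ε > (0 : ℝ), ∀ δ > (0 : ℝ), ∃ N : ℕ, ∀ n ≥ N,
    ∃ ℓ₁ ℓ₂ : ℕ, (ℓ₁ : ℝ) ≤ n * (Q₁ + δ) ∧ (ℓ₂ : ℝ) ≤ n * (Q₂ + δ) ∧
      ∃ code : MACCode A B C ℓ₁ ℓ₂ n,
        traceNorm (macOutput ω code - prodPow3 ω n) ≤ ε

end mac

/-- Marginal state on C₁ of the purification |φ_{AC₁}⟩. -/
def margC1 [Fintype A] (φ : A × C1 → ℂ) : Matrix C1 C1 ℂ :=
  Matrix.of fun c c' => ∑ a, φ (a, c) * star (φ (a, c'))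

/-- Marginal state on C₂ of the purification |χ_{BC₂}⟩. -/
def margC2 [Fintype B] (χ : B × C2 → ℂ) : Matrix C2 C2 ℂ :=
  Matrix.of fun c c' => ∑ b, χ (b, c) * star (χ (b, c'))

end QCoord

namespace QCoord

open Matrix Kronecker
open scoped ComplexOrder

/-- **Isometric decomposition of pure tripartite states with product
marginal2.** -/
theorem pure_tripartite_product_marginal_decomposition
    {A B C : Type} [Fintype A] [DecidableEq A] [Fintype B] [DecidableEq B]
    [Fintype C] [DecidableEq C]
    (u : A × B × C → ℂ) (hu : ∑ s, u s * star (u s) = 1)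
    (hprod : mAB3 (outer u) = tens (mA3 (outer u)) (mB3 (outer u))) :
    ∃ (d₁ d₂ : ℕ) (V : Matrix (Fin d₁ × Fin d₂) C ℂ)
      (φ : A × Fin d₁ → ℂ) (χ : B × Fin d₂ → ℂ),
      V.conjTranspose * V = 1 ∧
      (∀ a a', (∑ c₁, φ (a, c₁) * star (φ (a', c₁))) = mA3 (outer u) a a') ∧
      (∀ b b', (∑ c₂, χ (b, c₂) * star (χ (b', c₂))) = mB3 (outer u) b b') ∧
      (∀ a b c₁ c₂,
        (∑ c, V (c₁, c₂) c * u (a, b, c)) = φ (a, c₁) * χ (b, c₂)) := by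
  classical
  have hBne : Nonempty B := by
    by_contra hB
    rw [not_nonempty_iff] at hB
    have h0 : (∑ s : A × B × C, u s * star (u s)) = 0 :=
      Finset.sum_eq_zero fun s _ => (hB.false s.2.1).elim
    rw [h0] at hu
    exact zero_ne_one hu
  obtain ⟨j₀⟩ := hBne
  set ρA := mA3 (outer u) with hρAdef
  set ρB := mB3 (outer u) with hρBdef
  -- positivity of the marginals
  have hρA : ρA.PosSemidef := by
    have h : ρA = (Matrix.of fun a (x : B × C) => u (a, x.1, x.2)) *
        (Matrix.of fun a (x : B × C) => u (a, x.1, x.2))ᴴ := by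
      ext a a'
      simp only [hρAdef, mA3, outer, Matrix.mul_apply, Matrix.conjTranspose_apply,
        Matrix.of_apply, Fintype.sum_prod_type]
    rw [h]
    exact Matrix.posSemidef_self_mul_conjTranspose _
  have hρB : ρB.PosSemidef := by
    have h : ρB = (Matrix.of fun b (x : A × C) => u (x.1, b, x.2)) *
        (Matrix.of fun b (x : A × C) => u (x.1, b, x.2))ᴴ := by
      ext b b'
      simp only [hρBdef, mB3, outer, Matrix.mul_apply, Matrix.conjTranspose_apply,
        Matrix.of_apply, Fintype.sum_prod_type]
    rw [h]
    exact Matrix.posSemidef_self_mul_conjTranspose _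
  have hHA := hρA.1
  have hHB := hρB.1
  set pA : A → ℝ := hHA.eigenvalues with hpAdef
  set pB : B → ℝ := hHB.eigenvalues with hpBdef
  set UA : Matrix A A ℂ := (hHA.eigenvectorUnitary : Matrix A A ℂ) with hUAdef
  set UB : Matrix B B ℂ := (hHB.eigenvectorUnitary : Matrix B B ℂ) with hUBdef
  have hUA1 : UAᴴ * UA = 1 := by
    rw [hUAdef, ← Matrix.star_eq_conjTranspose]; exact hHA.eigenvectorUnitary.2.1
  have hUA2 : UA * UAᴴ = 1 := by
    rw [hUAdef, ← Matrix.star_eq_conjTranspose]; exact hHA.eigenvectorUnitary.2.2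
  have hUB1 : UBᴴ * UB = 1 := by
    rw [hUBdef, ← Matrix.star_eq_conjTranspose]; exact hHB.eigenvectorUnitary.2.1
  have hUB2 : UB * UBᴴ = 1 := by
    rw [hUBdef, ← Matrix.star_eq_conjTranspose]; exact hHB.eigenvectorUnitary.2.2
  have hpA0 : ∀ i, 0 ≤ pA i := fun i => hρA.eigenvalues_nonneg i
  have hpB0 : ∀ j, 0 ≤ pB j := fun j => hρB.eigenvalues_nonneg j
  have hspecA : ρA = UA * Matrix.diagonal (fun i => ((pA i : ℝ) : ℂ)) * UAᴴ := by
    rw [hUAdef, ← Matrix.star_eq_conjTranspose]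
    exact hHA.spectral_theorem
  have hspecB : ρB = UB * Matrix.diagonal (fun j => ((pB j : ℝ) : ℂ)) * UBᴴ := by
    rw [hUBdef, ← Matrix.star_eq_conjTranspose]
    exact hHB.spectral_theorem
  -- main matrices
  set M : Matrix (A × B) C ℂ := Matrix.of fun z c => u (z.1, z.2, c) with hMdef
  set Dm : Matrix (A × B) (A × B) ℂ := UA ⊗ₖ UB with hDmdef
  set dv : A × B → ℂ := fun z => ((pA z.1 * pB z.2 : ℝ) : ℂ) with hdvdef
  have hDmH : Dmᴴ = UAᴴ ⊗ₖ UBᴴ := by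
    ext z w
    simp only [hDmdef, Matrix.conjTranspose_apply, Matrix.kroneckerMap_apply, star_mul']
    try ring
  have hDD : Dmᴴ * Dm = 1 := by
    rw [hDmH, hDmdef, ← Matrix.mul_kronecker_mul, hUA1, hUB1, Matrix.one_kronecker_one]
  have hDD2 : Dm * Dmᴴ = 1 := by
    rw [hDmH, hDmdef, ← Matrix.mul_kronecker_mul, hUA2, hUB2, Matrix.one_kronecker_one]
  have hdiagk : (Matrix.diagonal (fun i => ((pA i : ℝ) : ℂ))) ⊗ₖ
      (Matrix.diagonal (fun j => ((pB j : ℝ) : ℂ))) = Matrix.diagonal dv := by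
    rw [Matrix.diagonal_kronecker_diagonal]
    congr 1
    funext z
    rw [hdvdef]
    push_cast
    try ring
  have hMM : M * Mᴴ = Dm * Matrix.diagonal dv * Dmᴴ := by
    have h1 : M * Mᴴ = mAB3 (outer u) := by
      ext z w
      simp only [hMdef, mAB3, outer, Matrix.mul_apply, Matrix.conjTranspose_apply,
        Matrix.of_apply]
    have h2 : tens ρA ρB = ρA ⊗ₖ ρB := rfl
    rw [h1, hprod, h2, hspecA, hspecB, Matrix.mul_kronecker_mul, Matrix.mul_kronecker_mul,
      hdiagk, ← hDmdef, ← hDmH]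
  set W : Matrix (A × B) C ℂ := Dmᴴ * M with hWdef
  have hF1 : W * Wᴴ = Matrix.diagonal dv := by
    rw [hWdef, Matrix.conjTranspose_mul, Matrix.conjTranspose_conjTranspose,
      show Dmᴴ * M * (Mᴴ * Dm) = Dmᴴ * (M * Mᴴ) * Dm by simp only [Matrix.mul_assoc], hMM,
      show Dmᴴ * (Dm * Matrix.diagonal dv * Dmᴴ) * Dm
        = Dmᴴ * Dm * Matrix.diagonal dv * (Dmᴴ * Dm) by simp only [Matrix.mul_assoc],
      hDD, Matrix.one_mul, Matrix.mul_one]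
  have hF2 : M * Wᴴ = Dm * Matrix.diagonal dv := by
    rw [hWdef, Matrix.conjTranspose_mul, Matrix.conjTranspose_conjTranspose,
      ← Matrix.mul_assoc, hMM,
      show Dm * Matrix.diagonal dv * Dmᴴ * Dm
        = Dm * Matrix.diagonal dv * (Dmᴴ * Dm) by simp only [Matrix.mul_assoc],
      hDD, Matrix.mul_one]
  have hF4 : Dm * W = M := by
    rw [hWdef, ← Matrix.mul_assoc, hDD2, Matrix.one_mul]
  have hWsT : Wᴴᵀ = W.map star := by
    ext z c
    simp [Matrix.conjTranspose_apply]
  have hF1' : (W.map star) * Wᵀ = Matrix.diagonal dv := by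
    have h := congrArg Matrix.transpose hF1
    rwa [Matrix.transpose_mul, hWsT, Matrix.diagonal_transpose] at h
  have hF2' : (W.map star) * Mᵀ = Matrix.diagonal dv * Dmᵀ := by
    have h := congrArg Matrix.transpose hF2
    rwa [Matrix.transpose_mul, Matrix.transpose_mul, hWsT, Matrix.diagonal_transpose] at h
  have hF4' : Wᵀ * Dmᵀ = Mᵀ := by
    have h := congrArg Matrix.transpose hF4
    rwa [Matrix.transpose_mul] at h
  have hF2e : ∀ (a : A) (b : B) (z : A × B),
      (∑ c, star (W z c) * u (a, b, c)) = dv z * (UA a z.1 * UB b z.2) := by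
    intro a b z
    have h := congrFun (congrFun hF2' z) (a, b)
    rw [Matrix.diagonal_mul] at h
    simpa only [Matrix.mul_apply, Matrix.map_apply, Matrix.transpose_apply,
      Matrix.of_apply, hMdef, hDmdef, Matrix.kroneckerMap_apply] using h
  have hF3 : ∀ z : A × B, dv z = 0 → ∀ c, W z c = 0 := by
    intro z hz c
    have h1 := congrFun (congrFun hF1 z) z
    rw [Matrix.mul_apply, Matrix.diagonal_apply_eq, hz] at h1
    have h2 : ((∑ c', Complex.normSq (W z c') : ℝ) : ℂ) = 0 := by
      push_cast
      rw [← h1]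
      refine Finset.sum_congr rfl fun c' _ => ?_
      rw [Matrix.conjTranspose_apply]
      exact (Complex.mul_conj (W z c')).symm
    have h3 : (∑ c', Complex.normSq (W z c')) = 0 := by exact_mod_cast h2
    have h4 := (Finset.sum_eq_zero_iff_of_nonneg
      (fun i _ => Complex.normSq_nonneg (W z i))).mp h3 c (Finset.mem_univ c)
    exact Complex.normSq_eq_zero.mp h4
  -- scalars
  set sA : A → ℝ := fun i => Real.sqrt (pA i) with hsAdef
  set sB : B → ℝ := fun j => Real.sqrt (pB j) with hsBdef
  set g : A → B → ℂ := fun i j =>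
    if pA i * pB j = 0 then 0 else (((sA i * sB j)⁻¹ : ℝ) : ℂ) with hgdef
  have hsq : ∀ i j, (sA i * sB j) * (sA i * sB j) = pA i * pB j := by
    intro i j
    rw [hsAdef, hsBdef, mul_mul_mul_comm, Real.mul_self_sqrt (hpA0 i),
      Real.mul_self_sqrt (hpB0 j)]
  have hst0 : ∀ i j, pA i * pB j = 0 → sA i * sB j = 0 := by
    intro i j h
    rcases mul_eq_zero.mp h with h' | h'
    · rw [hsAdef]; simp [h']
    · rw [hsBdef]; simp [h']
  have hstne : ∀ i j, pA i * pB j ≠ 0 → sA i * sB j ≠ 0 := by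
    intro i j h hc
    exact h (by rw [← hsq i j, hc, mul_zero])
  have hg_dv : ∀ i j, g i j * dv (i, j) = ((sA i * sB j : ℝ) : ℂ) := by
    intro i j
    by_cases h : pA i * pB j = 0
    · rw [hgdef]
      simp only [if_pos h, zero_mul, hst0 i j h]
      norm_num
    · rw [hgdef]
      simp only [if_neg h, hdvdef]
      rw [← hsq i j]
      push_cast
      field_simp
  have hg2_dv : ∀ z : A × B, g z.1 z.2 * g z.1 z.2 * dv z =
      if pA z.1 * pB z.2 = 0 then 0 else 1 := by
    rintro ⟨i, j⟩
    by_cases h : pA i * pB j = 0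
    · have hg0 : g i j = 0 := by simp only [hgdef]; rw [if_pos h]
      rw [hg0, if_pos h]; ring
    · rw [mul_assoc, hg_dv i j]
      have hg1 : g i j = (((sA i * sB j)⁻¹ : ℝ) : ℂ) := by
        simp only [hgdef]; rw [if_neg h]
      rw [hg1, if_neg h, ← Complex.ofReal_mul, inv_mul_cancel₀ (hstne i j h)]
      norm_num
  have hg_real : ∀ i j, star (g i j) = g i j := by
    intro i j
    by_cases h : pA i * pB j = 0
    · have hg0 : g i j = 0 := by simp only [hgdef]; rw [if_pos h]
      rw [hg0, star_zero]
    · have hg1 : g i j = (((sA i * sB j)⁻¹ : ℝ) : ℂ) := by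
        simp only [hgdef]; rw [if_neg h]
      rw [hg1]
      exact Complex.conj_ofReal _
  have hdv_real : ∀ z, star (dv z) = dv z := fun z => Complex.conj_ofReal _
  -- the projector Sm
  set G2 : Matrix (A × B) (A × B) ℂ := Matrix.diagonal (fun z => g z.1 z.2 * g z.1 z.2)
    with hG2def
  set Sm : Matrix C C ℂ := Wᵀ * G2 * (W.map star) with hSmdef
  have hmapsH : (W.map star)ᴴ = Wᵀ := by
    ext c z
    simp [Matrix.conjTranspose_apply, Matrix.map_apply]
  have hWTH : (Wᵀ)ᴴ = W.map star := by
    ext z c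
    simp [Matrix.conjTranspose_apply, Matrix.map_apply]
  have hG2H : G2ᴴ = G2 := by
    have hvv : star (fun i : A × B => g i.1 i.2 * g i.1 i.2)
        = fun i : A × B => g i.1 i.2 * g i.1 i.2 := by
      funext z
      rw [Pi.star_apply, star_mul', hg_real]
    rw [hG2def, Matrix.diagonal_conjTranspose, hvv]
  have hSmH : Smᴴ = Sm := by
    rw [hSmdef, Matrix.conjTranspose_mul, Matrix.conjTranspose_mul, hmapsH, hG2H, hWTH,
      Matrix.mul_assoc]
  have hG2dvG2 : G2 * Matrix.diagonal dv * G2 = G2 := by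
    have he : (fun i : A × B => g i.1 i.2 * g i.1 i.2 * dv i * (g i.1 i.2 * g i.1 i.2))
        = fun i : A × B => g i.1 i.2 * g i.1 i.2 := by
      funext z
      by_cases h : pA z.1 * pB z.2 = 0
      · have hg0 : g z.1 z.2 = 0 := by simp only [hgdef]; rw [if_pos h]
        rw [hg0]; ring
      · have h1 : g z.1 z.2 * g z.1 z.2 * dv z = 1 := by rw [hg2_dv z, if_neg h]
        calc g z.1 z.2 * g z.1 z.2 * dv z * (g z.1 z.2 * g z.1 z.2)
            = (g z.1 z.2 * g z.1 z.2 * dv z) * (g z.1 z.2 * g z.1 z.2) := by ring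
          _ = g z.1 z.2 * g z.1 z.2 := by rw [h1, one_mul]
    rw [hG2def, Matrix.diagonal_mul_diagonal, Matrix.diagonal_mul_diagonal, he]
  have hSmProj : Sm * Sm = Sm := by
    have h1 : Sm * Sm = Wᵀ * G2 * ((W.map star) * Wᵀ) * G2 * (W.map star) := by
      rw [hSmdef]; simp only [Matrix.mul_assoc]
    have h2 : Wᵀ * G2 * Matrix.diagonal dv * G2 * (W.map star)
        = Wᵀ * (G2 * Matrix.diagonal dv * G2) * (W.map star) := by
      simp only [Matrix.mul_assoc]
    rw [h1, hF1', h2, hG2dvG2, hSmdef]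
  have hWe : Wᵀ * Matrix.diagonal (fun z => g z.1 z.2 * g z.1 z.2 * dv z) = Wᵀ := by
    ext c z
    rw [Matrix.mul_diagonal, Matrix.transpose_apply]
    by_cases h : dv z = 0
    · rw [hF3 z h c]
      ring
    · have hpq : pA z.1 * pB z.2 ≠ 0 := by
        intro hc
        exact h (by rw [hdvdef]; simp [hc])
      have h1 : g z.1 z.2 * g z.1 z.2 * dv z = 1 := by rw [hg2_dv z, if_neg hpq]
      rw [h1, mul_one]
  have hSmM : Sm * Mᵀ = Mᵀ := by
    have h1 : Sm * Mᵀ = Wᵀ * G2 * ((W.map star) * Mᵀ) := by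
      rw [hSmdef]; simp only [Matrix.mul_assoc]
    rw [h1, hF2', hG2def, ← Matrix.mul_assoc, Matrix.mul_assoc (Wᵀ),
      Matrix.diagonal_mul_diagonal, hWe, hF4']
  have hSm_e : ∀ k c, Sm k c = ∑ z : A × B, g z.1 z.2 * g z.1 z.2 * (W z k * star (W z c)) := by
    intro k c
    rw [hSmdef, Matrix.mul_apply]
    refine Finset.sum_congr rfl fun z _ => ?_
    rw [Matrix.mul_diagonal, Matrix.transpose_apply, Matrix.map_apply]
    ring
  have hSmMe : ∀ (k : C) (a : A) (b : B), ∑ c, Sm k c * u (a, b, c) = u (a, b, k) := by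
    intro k a b
    have h := congrFun (congrFun hSmM k) (a, b)
    simpa only [Matrix.mul_apply, Matrix.transpose_apply, hMdef, Matrix.of_apply] using h
  have hQmH : (1 - Sm)ᴴ = 1 - Sm := by
    rw [Matrix.conjTranspose_sub, Matrix.conjTranspose_one, hSmH]
  have hQmProj : (1 - Sm) * (1 - Sm) = 1 - Sm := by
    have h : (1 - Sm) * (1 - Sm) = 1 - Sm - Sm + Sm * Sm := by noncomm_ring
    rw [h, hSmProj]
    abel
  -- entrywise spectral theorems
  have hspecAe : ∀ a a' : A, ρA a a' = ∑ i, ((pA i : ℝ) : ℂ) * (UA a i * star (UA a' i)) := by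
    intro a a'
    conv_lhs => rw [hspecA]
    rw [Matrix.mul_apply]
    refine Finset.sum_congr rfl fun i _ => ?_
    rw [Matrix.mul_diagonal, Matrix.conjTranspose_apply]
    ring
  have hspecBe : ∀ b b' : B, ρB b b' = ∑ j, ((pB j : ℝ) : ℂ) * (UB b j * star (UB b' j)) := by
    intro b b'
    conv_lhs => rw [hspecB]
    rw [Matrix.mul_apply]
    refine Finset.sum_congr rfl fun j _ => ?_
    rw [Matrix.mul_diagonal, Matrix.conjTranspose_apply]
    ring
  have hsA2 : ∀ i, ((sA i : ℝ) : ℂ) * ((sA i : ℝ) : ℂ) = ((pA i : ℝ) : ℂ) := by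
    intro i
    rw [← Complex.ofReal_mul]
    congr 1
    simp only [hsAdef]
    exact Real.mul_self_sqrt (hpA0 i)
  have hsB2 : ∀ j, ((sB j : ℝ) : ℂ) * ((sB j : ℝ) : ℂ) = ((pB j : ℝ) : ℂ) := by
    intro j
    rw [← Complex.ofReal_mul]
    congr 1
    simp only [hsBdef]
    exact Real.mul_self_sqrt (hpB0 j)
  -- the construction
  set d₁ := Fintype.card A + Fintype.card C with hd₁def
  set d₂ := Fintype.card B with hd₂def
  set E₁ : Fin d₁ ≃ A ⊕ C :=
    finSumFinEquiv.symm.trans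
      (Equiv.sumCongr (Fintype.equivFin A).symm (Fintype.equivFin C).symm) with hE₁def
  set E₂ : Fin d₂ ≃ B := (Fintype.equivFin B).symm with hE₂def
  set Vm : Matrix (Fin d₁ × Fin d₂) C ℂ := Matrix.of fun x c =>
    Sum.elim (fun i => g i (E₂ x.2) * star (W (i, E₂ x.2) c))
      (fun k => if E₂ x.2 = j₀ then (1 - Sm) k c else 0) (E₁ x.1) with hVmdef
  set φ : A × Fin d₁ → ℂ := fun ac =>
    Sum.elim (fun i => ((sA i : ℝ) : ℂ) * UA ac.1 i) (fun _ => 0) (E₁ ac.2) with hφdef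
  set χ : B × Fin d₂ → ℂ := fun bc => ((sB (E₂ bc.2) : ℝ) : ℂ) * UB bc.1 (E₂ bc.2) with hχdef
  refine ⟨d₁, d₂, Vm, φ, χ, ?_, ?_, ?_, ?_⟩
  · -- isometry
    ext c c'
    rw [Matrix.mul_apply, Matrix.one_apply]
    rw [Finset.sum_congr rfl fun x (_ : x ∈ Finset.univ) =>
      (by rw [Matrix.conjTranspose_apply] :
        Vmᴴ c x * Vm x c' = star (Vm x c) * Vm x c')]
    rw [← Equiv.sum_comp (Equiv.prodCongr E₁.symm E₂.symm)
      (fun x : Fin d₁ × Fin d₂ => star (Vm x c) * Vm x c')]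
    simp only [Equiv.prodCongr_apply, Prod.map]
    rw [Fintype.sum_prod_type, Fintype.sum_sum_type]
    simp only [hVmdef, Matrix.of_apply, Equiv.apply_symm_apply, Sum.elim_inl, Sum.elim_inr]
    have hblk1 : (∑ i : A, ∑ y : B,
        star (g i y * star (W (i, y) c)) * (g i y * star (W (i, y) c'))) = Sm c c' := by
      rw [hSm_e c c', Fintype.sum_prod_type]
      refine Finset.sum_congr rfl fun i _ => Finset.sum_congr rfl fun y _ => ?_
      rw [star_mul', star_star, hg_real]
      ring
    have hblk2 : (∑ k : C, ∑ y : B,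
        star (if y = j₀ then (1 - Sm) k c else 0) * (if y = j₀ then (1 - Sm) k c' else 0))
        = (1 : Matrix C C ℂ) c c' - Sm c c' := by
      have hin : ∀ k : C, (∑ y : B,
          star (if y = j₀ then (1 - Sm) k c else 0) * (if y = j₀ then (1 - Sm) k c' else 0))
          = star ((1 - Sm) k c) * ((1 - Sm) k c') := by
        intro k
        rw [Finset.sum_congr rfl fun y (_ : y ∈ Finset.univ) =>
          (by split <;> simp :
            star (if y = j₀ then (1 - Sm) k c else 0) * (if y = j₀ then (1 - Sm) k c' else 0)
              = if y = j₀ then star ((1 - Sm) k c) * ((1 - Sm) k c') else 0)]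
        rw [Finset.sum_ite_eq' Finset.univ j₀ fun _ => star ((1 - Sm) k c) * ((1 - Sm) k c')]
        rw [if_pos (Finset.mem_univ j₀)]
      rw [Finset.sum_congr rfl fun k _ => hin k]
      have hstar : ∀ k, star ((1 - Sm) k c) = (1 - Sm) c k := by
        intro k
        have h := congrFun (congrFun hQmH c) k
        rw [Matrix.conjTranspose_apply] at h
        exact h
      rw [Finset.sum_congr rfl fun k (_ : k ∈ Finset.univ) =>
        (by rw [hstar k] : star ((1 - Sm) k c) * ((1 - Sm) k c')
          = (1 - Sm) c k * (1 - Sm) k c')]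
      have h := congrFun (congrFun hQmProj c) c'
      rw [Matrix.mul_apply] at h
      rw [h, Matrix.sub_apply]
    rw [hblk1, hblk2, Matrix.one_apply]
    ring
  · -- φ marginal
    intro a a'
    rw [← Equiv.sum_comp E₁.symm (fun x : Fin d₁ => φ (a, x) * star (φ (a', x))),
      Fintype.sum_sum_type]
    simp only [hφdef, Equiv.apply_symm_apply, Sum.elim_inl, Sum.elim_inr, star_zero,
      mul_zero, zero_mul, Finset.sum_const_zero, add_zero]
    rw [hspecAe a a']
    refine Finset.sum_congr rfl fun i _ => ?_
    rw [star_mul', Complex.star_def, Complex.conj_ofReal]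
    calc ((sA i : ℝ) : ℂ) * UA a i * (((sA i : ℝ) : ℂ) * star (UA a' i))
        = (((sA i : ℝ) : ℂ) * ((sA i : ℝ) : ℂ)) * (UA a i * star (UA a' i)) := by ring
      _ = ((pA i : ℝ) : ℂ) * (UA a i * star (UA a' i)) := by rw [hsA2]
  · -- χ marginal
    intro b b'
    rw [← Equiv.sum_comp E₂.symm (fun y : Fin d₂ => χ (b, y) * star (χ (b', y)))]
    simp only [hχdef, Equiv.apply_symm_apply]
    rw [hspecBe b b']
    refine Finset.sum_congr rfl fun j _ => ?_
    rw [star_mul', Complex.star_def, Complex.conj_ofReal]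
    calc ((sB j : ℝ) : ℂ) * UB b j * (((sB j : ℝ) : ℂ) * star (UB b' j))
        = (((sB j : ℝ) : ℂ) * ((sB j : ℝ) : ℂ)) * (UB b j * star (UB b' j)) := by ring
      _ = ((pB j : ℝ) : ℂ) * (UB b j * star (UB b' j)) := by rw [hsB2]
  · -- main equation
    intro a b c₁ c₂
    rcases hE : E₁ c₁ with i | k
    · have hVe : ∀ c, Vm (c₁, c₂) c = g i (E₂ c₂) * star (W (i, E₂ c₂) c) := by
        intro c
        rw [hVmdef]
        simp only [Matrix.of_apply, hE, Sum.elim_inl]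
      have hφe : φ (a, c₁) = ((sA i : ℝ) : ℂ) * UA a i := by
        rw [hφdef]
        simp only [hE, Sum.elim_inl]
      calc ∑ c, Vm (c₁, c₂) c * u (a, b, c)
          = g i (E₂ c₂) * ∑ c, star (W (i, E₂ c₂) c) * u (a, b, c) := by
            rw [Finset.mul_sum]
            exact Finset.sum_congr rfl fun c _ => by rw [hVe c]; ring
        _ = g i (E₂ c₂) * (dv (i, E₂ c₂) * (UA a i * UB b (E₂ c₂))) := by
            rw [hF2e a b (i, E₂ c₂)]
        _ = (g i (E₂ c₂) * dv (i, E₂ c₂)) * (UA a i * UB b (E₂ c₂)) := by ring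
        _ = ((sA i * sB (E₂ c₂) : ℝ) : ℂ) * (UA a i * UB b (E₂ c₂)) := by
            rw [hg_dv i (E₂ c₂)]
        _ = φ (a, c₁) * χ (b, c₂) := by
            rw [hφe, hχdef]
            push_cast
            ring
    · have hφe : φ (a, c₁) = 0 := by
        rw [hφdef]
        simp only [hE, Sum.elim_inr]
      rw [hφe, zero_mul]
      by_cases hj : E₂ c₂ = j₀
      · have hVe : ∀ c, Vm (c₁, c₂) c = (1 : Matrix C C ℂ) k c - Sm k c := by
          intro c
          rw [hVmdef]
          simp only [Matrix.of_apply, hE, Sum.elim_inr, if_pos hj, Matrix.sub_apply]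
        calc ∑ c, Vm (c₁, c₂) c * u (a, b, c)
            = (∑ c, (1 : Matrix C C ℂ) k c * u (a, b, c)) - ∑ c, Sm k c * u (a, b, c) := by
              rw [← Finset.sum_sub_distrib]
              exact Finset.sum_congr rfl fun c _ => by rw [hVe c]; ring
          _ = u (a, b, k) - u (a, b, k) := by
              rw [hSmMe k a b]
              congr 1
              rw [Finset.sum_congr rfl fun c (_ : c ∈ Finset.univ) =>
                (by rw [Matrix.one_apply]; split <;> simp :
                  (1 : Matrix C C ℂ) k c * u (a, b, c) = if k = c then u (a, b, c) else 0)]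
              rw [Finset.sum_ite_eq Finset.univ k fun c => u (a, b, c)]
              rw [if_pos (Finset.mem_univ k)]
          _ = 0 := sub_self _
      · have hVe : ∀ c, Vm (c₁, c₂) c = 0 := by
          intro c
          rw [hVmdef]
          simp only [Matrix.of_apply, hE, Sum.elim_inr, if_neg hj]
        rw [Finset.sum_congr rfl fun c (_ : c ∈ Finset.univ) =>
          (by rw [hVe c, zero_mul] : Vm (c₁, c₂) c * u (a, b, c) = 0)]
        exact Finset.sum_const_zero




end QCoord
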